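/- For any chain complex C_• of abelian groups, there is an exact sequence 0 → H_k^{(2)}(C_•) → Z/2 ⊗ H_k(C_•) → H_k(C_•; Z/2), where H_k^{(2)}(C_•) = (Z_k ∩ 2C_k)/(2Z_k + (B_k ∩ 2C_k)). -/
import Mathlib


open TensorProduct

section
/- A chain complex of abelian groups around homological position k is shown as
`A --f--> B --g--> C` with g ∘ f = 0; its homology at the middle spot is
H = ker g / im f. -/
variable {A B C : Type} [AddCommGroup A] [AddCommGroup B] [AddCommGroup C]

/-- Multiplication by 2. -/
def dbl (B : Type) [AddCommGroup B] : B →+ B :=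
  AddMonoidHom.mk' (fun b => (2 : ℤ) • b) (fun a b => smul_add 2 a b)

variable (f : A →+ B) (g : B →+ C)

/-- H_k(C•): cycles modulo boundaries. -/
abbrev Hmid := ↥g.ker ⧸ (f.range.addSubgroupOf g.ker)

/-- H_k^{(2)}(C•) = (Z_k ∩ 2C_k) / (2Z_k + (B_k ∩ 2C_k)). -/
abbrev Htwo := ↥(g.ker ⊓ (dbl B).range) ⧸
  (((AddSubgroup.map (dbl B) g.ker) ⊔ (f.range ⊓ (dbl B).range)).addSubgroupOf
    (g.ker ⊓ (dbl B).range))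

/-- The complex with ℤ/2 coefficients: ℤ/2 ⊗ C•. -/
noncomputable abbrev ftwo : (ZMod 2) ⊗[ℤ] A →ₗ[ℤ] (ZMod 2) ⊗[ℤ] B :=
  LinearMap.lTensor (ZMod 2) f.toIntLinearMap
noncomputable abbrev gtwo : (ZMod 2) ⊗[ℤ] B →ₗ[ℤ] (ZMod 2) ⊗[ℤ] C :=
  LinearMap.lTensor (ZMod 2) g.toIntLinearMap

/-- H_k(C•; ℤ/2): homology of the complex with ℤ/2 coefficients. -/
abbrev Hmodtwo := ↥(LinearMap.ker (gtwo g)) ⧸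
  ((LinearMap.range (ftwo f)).comap (LinearMap.ker (gtwo g)).subtype)

/-- Defining property of the map H_k^{(2)} → ℤ/2 ⊗ H_k: the class of a cycle
lying in 2C_k is sent to 1 tensored with its homology class. -/
def PhiProp (Φ : Htwo f g →+ (ZMod 2) ⊗[ℤ] (Hmid f g)) : Prop :=
  ∀ (b : B) (hb1 : b ∈ g.ker) (hb2 : b ∈ (dbl B).range),
    Φ (QuotientAddGroup.mk ⟨b, AddSubgroup.mem_inf.mpr ⟨hb1, hb2⟩⟩) =
      (1 : ZMod 2) ⊗ₜ[ℤ] (QuotientAddGroup.mk ⟨b, hb1⟩ : Hmid f g)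

/-- Defining property of the natural map ℤ/2 ⊗ H_k → H_k(C•; ℤ/2):
1 ⊗ [z] ↦ [1 ⊗ z]. -/
def PsiProp (Ψ : (ZMod 2) ⊗[ℤ] (Hmid f g) →+ Hmodtwo f g) : Prop :=
  ∀ (b : B) (hb : b ∈ g.ker) (w : (ZMod 2) ⊗[ℤ] B) (hw : w ∈ LinearMap.ker (gtwo g)),
    w = (1 : ZMod 2) ⊗ₜ[ℤ] b →
    Ψ ((1 : ZMod 2) ⊗ₜ[ℤ] (QuotientAddGroup.mk ⟨b, hb⟩ : Hmid f g)) =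
      Submodule.Quotient.mk ⟨w, hw⟩

end

namespace ExactAux
variable {M N : Type} [AddCommGroup M] [AddCommGroup N]

lemma smul_congr (h2 : ∀ n : N, (2:ℤ) • n = 0) {a b : ℤ}
    (hab : (a : ZMod 2) = (b : ZMod 2)) (n : N) : a • n = b • n := by
  have hd : (2:ℤ) ∣ b - a := by
    have := (ZMod.intCast_eq_intCast_iff a b 2).mp hab
    exact_mod_cast this.dvd
  obtain ⟨k, hk⟩ := hd
  have : b • n = a • n + (b - a) • n := by rw [← add_smul]; ring_nf
  rw [this, hk, mul_smul, h2, add_zero]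

lemma valcast (x : ZMod 2) : ((x.val : ℤ) : ZMod 2) = x := by
  push_cast [ZMod.natCast_val, ZMod.cast_id]
  rfl

/-- Lift an additive hom `M →+ N` (with `N` 2-torsion) to `ℤ/2 ⊗ M →ₗ N`. -/
noncomputable def lift2 (α : M →+ N) (h2 : ∀ n : N, (2:ℤ) • n = 0) :
    ZMod 2 ⊗[ℤ] M →ₗ[ℤ] N :=
  TensorProduct.lift <| LinearMap.mk₂ ℤ (fun x m => ((x.val : ℤ)) • α m)
    (fun x y m => by
      show ((x+y).val : ℤ) • α m = (x.val : ℤ) • α m + (y.val : ℤ) • α m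
      rw [← add_smul]
      exact smul_congr h2 (by rw [Int.cast_add, valcast, valcast, valcast]) _)
    (fun c x m => by
      show ((c • x).val : ℤ) • α m = c • ((x.val : ℤ) • α m)
      rw [← mul_smul]
      refine smul_congr h2 ?_ _
      rw [Int.cast_mul, valcast, valcast, zsmul_eq_mul])
    (fun x m m' => by
      show (x.val : ℤ) • α (m + m') = (x.val : ℤ) • α m + (x.val : ℤ) • α m'
      rw [map_add, smul_add])
    (fun c x m => by
      show (x.val : ℤ) • α (c • m) = c • ((x.val : ℤ) • α m)
      rw [map_zsmul, smul_comm])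

lemma lift2_tmul (α : M →+ N) (h2 : ∀ n : N, (2:ℤ) • n = 0) (x : ZMod 2) (m : M) :
    lift2 α h2 (x ⊗ₜ[ℤ] m) = (x.val : ℤ) • α m := rfl

lemma lift2_one_tmul (α : M →+ N) (h2 : ∀ n : N, (2:ℤ) • n = 0) (m : M) :
    lift2 α h2 ((1 : ZMod 2) ⊗ₜ[ℤ] m) = α m := by
  have h1 : (((1 : ZMod 2).val : ℤ)) = 1 := rfl
  rw [lift2_tmul, h1, one_smul]

lemma two_smul_tensor (w : ZMod 2 ⊗[ℤ] M) : (2:ℤ) • w = 0 := by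
  induction w using TensorProduct.induction_on with
  | zero => simp
  | tmul x m =>
      rw [TensorProduct.smul_tmul']
      have : (2:ℤ) • x = 0 := by
        rw [zsmul_eq_mul]
        have h20 : ((2:ℤ) : ZMod 2) = 0 := by decide
        rw [h20, zero_mul]
      rw [this, TensorProduct.zero_tmul]
  | add a b ha hb => rw [smul_add, ha, hb, add_zero]

/-- 2-torsion of M ⧸ 2M. -/
lemma two_smul_quot (q : M ⧸ (dbl M).range) : (2:ℤ) • q = 0 := by
  induction q using QuotientAddGroup.induction_on with
  | H m =>
      rw [← QuotientAddGroup.mk_zsmul, QuotientAddGroup.eq_zero_iff]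
      exact ⟨m, rfl⟩

lemma mem_double_of_tmul_eq_zero (b : M) (h : (1 : ZMod 2) ⊗ₜ[ℤ] b = 0) :
    b ∈ (dbl M).range := by
  have := congrArg (lift2 (QuotientAddGroup.mk' (dbl M).range) two_smul_quot) h
  rw [lift2_one_tmul, map_zero] at this
  exact (QuotientAddGroup.eq_zero_iff b).mp this

lemma eq_one_tmul (w : ZMod 2 ⊗[ℤ] M) : ∃ m : M, w = (1 : ZMod 2) ⊗ₜ[ℤ] m := by
  induction w using TensorProduct.induction_on with
  | zero => exact ⟨0, (TensorProduct.tmul_zero _ _).symm⟩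
  | tmul x m =>
      refine ⟨(x.val : ℤ) • m, ?_⟩
      rw [← TensorProduct.smul_tmul, zsmul_eq_mul, mul_one, valcast]
  | add a b ha hb =>
      obtain ⟨m, rfl⟩ := ha; obtain ⟨m', rfl⟩ := hb
      exact ⟨m + m', (TensorProduct.tmul_add _ _ _).symm⟩

end ExactAux


/-- For any chain complex of abelian groups (displayed around
one homological position as A → B → C), there is an exact sequence
0 → H_k^{(2)}(C•) → ℤ/2 ⊗ H_k(C•) → H_k(C•; ℤ/2): both maps exist, the first is
injective, and the image of the first equals the kernel of the second. -/
theorem exact_sequence_Htwo {A B C : Type}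
    [AddCommGroup A] [AddCommGroup B] [AddCommGroup C]
    (f : A →+ B) (g : B →+ C) (hgf : ∀ a : A, g (f a) = 0) :
    (∃ Φ : Htwo f g →+ (ZMod 2) ⊗[ℤ] (Hmid f g), PhiProp f g Φ) ∧
    (∃ Ψ : (ZMod 2) ⊗[ℤ] (Hmid f g) →+ Hmodtwo f g, PsiProp f g Ψ) ∧
    (∀ (Φ : Htwo f g →+ (ZMod 2) ⊗[ℤ] (Hmid f g))
       (Ψ : (ZMod 2) ⊗[ℤ] (Hmid f g) →+ Hmodtwo f g),
      PhiProp f g Φ → PsiProp f g Ψ →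
        Function.Injective Φ ∧ ∀ y, Ψ y = 0 ↔ y ∈ Φ.range) := by
  classical
  -- 2-torsion of Hmodtwo
  have hT : ∀ q : Hmodtwo f g, (2:ℤ) • q = 0 := by
    intro q
    obtain ⟨⟨w, hw⟩, rfl⟩ := Submodule.Quotient.mk_surjective _ q
    have h0 : (2:ℤ) • (⟨w, hw⟩ : LinearMap.ker (gtwo g)) = 0 :=
      Subtype.ext (ExactAux.two_smul_tensor w)
    rw [← Submodule.Quotient.mk_smul, h0]
    rfl
  -- 1 ⊗ z is a cycle when z is
  have hker1 : ∀ z : ↥g.ker, (1:ZMod 2) ⊗ₜ[ℤ] (z:B) ∈ LinearMap.ker (gtwo g) := by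
    intro z
    rw [LinearMap.mem_ker]
    show LinearMap.lTensor (ZMod 2) g.toIntLinearMap ((1:ZMod 2) ⊗ₜ[ℤ] (z:B)) = 0
    rw [LinearMap.lTensor_tmul]
    have hz : g.toIntLinearMap (z:B) = 0 := z.2
    rw [hz, TensorProduct.tmul_zero]
  -- the maps
  have hmemk : ∀ x : ↥(g.ker ⊓ (dbl B).range), (x:B) ∈ g.ker :=
    fun x => (AddSubgroup.mem_inf.mp x.2).1
  -- Phi
  let φ₀ : ↥(g.ker ⊓ (dbl B).range) →+ ZMod 2 ⊗[ℤ] Hmid f g := AddMonoidHom.mk'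
    (fun x => (1:ZMod 2) ⊗ₜ[ℤ] (QuotientAddGroup.mk ⟨(x:B), hmemk x⟩ : Hmid f g))
    (fun x y => by
      rw [← TensorProduct.tmul_add, ← QuotientAddGroup.mk_add]
      rfl)
  have hφker : (((AddSubgroup.map (dbl B) g.ker) ⊔ (f.range ⊓ (dbl B).range)).addSubgroupOf
      (g.ker ⊓ (dbl B).range)) ≤ φ₀.ker := by
    intro x hx
    rw [AddMonoidHom.mem_ker]
    obtain ⟨y, hy, z, hz, hyz⟩ := AddSubgroup.mem_sup.mp (AddSubgroup.mem_addSubgroupOf.mp hx)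
    obtain ⟨z₀, hz₀, rfl⟩ := AddSubgroup.mem_map.mp hy
    obtain ⟨hz1, hz2⟩ := AddSubgroup.mem_inf.mp hz
    obtain ⟨a, rfl⟩ := hz1
    show (1:ZMod 2) ⊗ₜ[ℤ] (QuotientAddGroup.mk ⟨(x:B), hmemk x⟩ : Hmid f g) = 0
    have hz₀k : (2:ℤ) • z₀ ∈ g.ker := by
      rw [AddMonoidHom.mem_ker, map_zsmul]
      rw [AddMonoidHom.mem_ker] at hz₀
      rw [hz₀, smul_zero]
    have hfak : f a ∈ g.ker := AddMonoidHom.mem_ker.mpr (hgf a)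
    have h1 : (⟨(x:B), hmemk x⟩ : ↥g.ker) = (2:ℤ) • ⟨z₀, hz₀⟩ + ⟨f a, hfak⟩ := by
      apply Subtype.ext
      show (x:B) = (2:ℤ) • z₀ + f a
      exact hyz.symm
    rw [h1, QuotientAddGroup.mk_add, QuotientAddGroup.mk_zsmul]
    have h2 : (QuotientAddGroup.mk ⟨f a, hfak⟩ : Hmid f g) = 0 :=
      (QuotientAddGroup.eq_zero_iff _).mpr (AddSubgroup.mem_addSubgroupOf.mpr ⟨a, rfl⟩)
    rw [h2, add_zero, TensorProduct.tmul_smul, ExactAux.two_smul_tensor]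
  refine ⟨⟨QuotientAddGroup.lift _ φ₀ hφker, ?_⟩, ?_, ?_⟩
  · intro b hb1 hb2
    rfl
  -- Psi
  · let ψ₁ : ↥g.ker →+ Hmodtwo f g := AddMonoidHom.mk'
      (fun z => Submodule.Quotient.mk ⟨(1:ZMod 2) ⊗ₜ[ℤ] (z:B), hker1 z⟩)
      (fun z z' => by
        rw [← Submodule.Quotient.mk_add]
        exact congrArg Submodule.Quotient.mk (Subtype.ext (TensorProduct.tmul_add _ _ _)))
    have hψker : f.range.addSubgroupOf g.ker ≤ ψ₁.ker := by
      intro x hx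
      rw [AddMonoidHom.mem_ker]
      obtain ⟨a, ha⟩ := AddSubgroup.mem_addSubgroupOf.mp hx
      show Submodule.Quotient.mk (⟨(1:ZMod 2) ⊗ₜ[ℤ] (x:B), hker1 x⟩ : LinearMap.ker (gtwo g)) = 0
      rw [Submodule.Quotient.mk_eq_zero, Submodule.mem_comap]
      refine ⟨(1:ZMod 2) ⊗ₜ[ℤ] a, ?_⟩
      show LinearMap.lTensor (ZMod 2) f.toIntLinearMap ((1:ZMod 2) ⊗ₜ[ℤ] a) = (1:ZMod 2) ⊗ₜ[ℤ] (x:B)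
      rw [LinearMap.lTensor_tmul]
      show (1:ZMod 2) ⊗ₜ[ℤ] (f a) = (1:ZMod 2) ⊗ₜ[ℤ] (x:B)
      rw [ha]
    refine ⟨(ExactAux.lift2 (QuotientAddGroup.lift _ ψ₁ hψker) hT).toAddMonoidHom, ?_⟩
    intro b hb w hw hweq
    subst hweq
    show ExactAux.lift2 (QuotientAddGroup.lift _ ψ₁ hψker) hT
      ((1:ZMod 2) ⊗ₜ[ℤ] (QuotientAddGroup.mk ⟨b, hb⟩ : Hmid f g)) = _
    rw [ExactAux.lift2_one_tmul]
    rfl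
  -- exactness
  · intro Φ Ψ hΦ hΨ
    constructor
    · rw [injective_iff_map_eq_zero]
      intro x hx
      induction x using QuotientAddGroup.induction_on with
      | H s =>
        obtain ⟨b, hb⟩ := s
        obtain ⟨hb1, hb2⟩ := AddSubgroup.mem_inf.mp hb
        have h0 : (1:ZMod 2) ⊗ₜ[ℤ] (QuotientAddGroup.mk ⟨b, hb1⟩ : Hmid f g) = 0 := by
          rw [← hΦ b hb1 hb2]
          exact hx
        have hmem := ExactAux.mem_double_of_tmul_eq_zero _ h0
        obtain ⟨h', hh'⟩ := hmem
        induction h' using QuotientAddGroup.induction_on with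
        | H s' =>
          obtain ⟨z, hz⟩ := s'
          have hh'' : (QuotientAddGroup.mk ((2:ℤ) • ⟨z, hz⟩) : Hmid f g)
              = QuotientAddGroup.mk ⟨b, hb1⟩ := by
            rw [QuotientAddGroup.mk_zsmul]
            exact hh'
          rw [QuotientAddGroup.eq] at hh''
          obtain ⟨a, ha⟩ := AddSubgroup.mem_addSubgroupOf.mp hh''
          have ha' : f a = -((2:ℤ) • z) + b := ha
          rw [QuotientAddGroup.eq_zero_iff, AddSubgroup.mem_addSubgroupOf]
          apply AddSubgroup.mem_sup.mpr
          obtain ⟨u, hu⟩ := hb2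
          refine ⟨(2:ℤ) • z, AddSubgroup.mem_map.mpr ⟨z, hz, rfl⟩, f a,
            AddSubgroup.mem_inf.mpr ⟨⟨a, rfl⟩, ⟨u - z, ?_⟩⟩, ?_⟩
          · show (2:ℤ) • (u - z) = f a
            have hu' : (2:ℤ) • u = b := hu
            rw [smul_sub, hu', ha']
            abel
          · rw [ha']
            abel
    · intro y
      constructor
      · intro hy
        obtain ⟨h, rfl⟩ := ExactAux.eq_one_tmul y
        induction h using QuotientAddGroup.induction_on with
        | H s =>
          obtain ⟨z, hz⟩ := s
          rw [hΨ z hz ((1:ZMod 2) ⊗ₜ[ℤ] z) (hker1 ⟨z, hz⟩) rfl] at hy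
          rw [Submodule.Quotient.mk_eq_zero, Submodule.mem_comap] at hy
          obtain ⟨t, ht⟩ := hy
          obtain ⟨a, rfl⟩ := ExactAux.eq_one_tmul t
          have ht' : (1:ZMod 2) ⊗ₜ[ℤ] (f a) = (1:ZMod 2) ⊗ₜ[ℤ] z := by
            have ht2 : (ftwo f) ((1:ZMod 2) ⊗ₜ[ℤ] a) = (1:ZMod 2) ⊗ₜ[ℤ] z := ht
            rw [← ht2]
            show (1:ZMod 2) ⊗ₜ[ℤ] (f a)
              = LinearMap.lTensor (ZMod 2) f.toIntLinearMap ((1:ZMod 2) ⊗ₜ[ℤ] a)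
            rw [LinearMap.lTensor_tmul]
            rfl
          have hzero : (1:ZMod 2) ⊗ₜ[ℤ] (z - f a) = 0 := by
            rw [TensorProduct.tmul_sub, ht', sub_self]
          have hb2 : z - f a ∈ (dbl B).range := ExactAux.mem_double_of_tmul_eq_zero _ hzero
          have hb1 : z - f a ∈ g.ker := by
            rw [AddMonoidHom.mem_ker, map_sub]
            rw [AddMonoidHom.mem_ker] at hz
            rw [hz, hgf a, sub_zero]
          refine ⟨QuotientAddGroup.mk ⟨z - f a, AddSubgroup.mem_inf.mpr ⟨hb1, hb2⟩⟩, ?_⟩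
          rw [hΦ _ hb1 hb2]
          congr 1
          rw [QuotientAddGroup.eq]
          apply AddSubgroup.mem_addSubgroupOf.mpr
          refine ⟨a, ?_⟩
          show f a = -(z - f a) + z
          abel
      · rintro ⟨x, rfl⟩
        induction x using QuotientAddGroup.induction_on with
        | H s =>
          obtain ⟨b, hb⟩ := s
          obtain ⟨hb1, hb2⟩ := AddSubgroup.mem_inf.mp hb
          have h1 : Φ (QuotientAddGroup.mk ⟨b, hb⟩) =
              (1:ZMod 2) ⊗ₜ[ℤ] (QuotientAddGroup.mk ⟨b, hb1⟩ : Hmid f g) := hΦ b hb1 hb2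
          rw [h1, hΨ b hb1 ((1:ZMod 2) ⊗ₜ[ℤ] b) (hker1 ⟨b, hb1⟩) rfl]
          rw [Submodule.Quotient.mk_eq_zero, Submodule.mem_comap]
          obtain ⟨u, hu⟩ := hb2
          have hu' : (2:ℤ) • u = b := hu
          have h0 : (1:ZMod 2) ⊗ₜ[ℤ] b = 0 := by
            rw [← hu', TensorProduct.tmul_smul, ExactAux.two_smul_tensor]
          refine ⟨0, ?_⟩
          show LinearMap.lTensor (ZMod 2) f.toIntLinearMap 0 = (1:ZMod 2) ⊗ₜ[ℤ] b
          rw [map_zero, h0]
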